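/- arXiv:1504.08265 — 8 statements merged into one kernel-verified Lean document; each statement's English description precedes it below -/
import Mathlib

section
/- Let r=(v,t) be a replica and ρ∈ℕ with ρ ≤ v+t. Then every directed path in the grid from (0,0) to r contains at least ρ edges that are edges of the quarter ball B(r,ρ). -/
/-- A replica is a pair `(v, t)` of a network node and a time. -/
abbrev Replica : Type := ℕ × ℕ

/-- A (directed) grid edge is a pair of replicas. -/
abbrev GEdge : Type := Replica × Replica

/-- Horizontal directed edge `((v,t),(v+1,t))`. -/
def isHoriz (e : GEdge) : Prop := e.2 = (e.1.1 + 1, e.1.2)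

/-- Vertical arc `((v,t),(v,t+1))`. -/
def isArc (e : GEdge) : Prop := e.2 = (e.1.1, e.1.2 + 1)

def isGridEdge (e : GEdge) : Prop := isHoriz e ∨ isArc e

/-- The quarter ball `B(r,ρ)`: replicas `(u,s)` with `u ≤ v`, `s ≤ t` and
`(v−u)+(t−s) ≤ ρ`. -/
def qball (r : Replica) (ρ : ℕ) : Set Replica :=
  {q | q.1 ≤ r.1 ∧ q.2 ≤ r.2 ∧ (r.1 - q.1) + (r.2 - q.2) ≤ ρ}

/-- Grid edges with both endpoints in the quarter ball `B(r,ρ)`. -/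
def ballEdge (r : Replica) (ρ : ℕ) (e : GEdge) : Prop :=
  isGridEdge e ∧ e.1 ∈ qball r ρ ∧ e.2 ∈ qball r ρ

/-- Every directed grid path from `(0,0)` to `r = (v,t)` contains at least `ρ`
edges of the quarter ball `B(r,ρ)`, provided `ρ ≤ v + t`. -/
theorem path_meets_qball (r : Replica) (ρ : ℕ) (hρ : ρ ≤ r.1 + r.2)
    (L : ℕ) (f : ℕ → Replica) (h0 : f 0 = (0, 0)) (hL : f L = r)
    (hstep : ∀ k < L, isGridEdge (f k, f (k + 1))) :
    ρ ≤ {k | k < L ∧ ballEdge r ρ (f k, f (k + 1))}.ncard := by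
  -- each step increases the coordinate sum by 1
  have hsum : ∀ k ≤ L, (f k).1 + (f k).2 = k := by
    intro k
    induction k with
    | zero => intro _; rw [h0]; rfl
    | succ n ih =>
      intro hnL
      have hn : n < L := Nat.lt_of_succ_le hnL
      have hs := hstep n hn
      have ihn := ih (Nat.le_of_lt hn)
      rcases hs with h | h
      · have : f (n+1) = ((f n).1 + 1, (f n).2) := h
        rw [this]; simp; omega
      · have : f (n+1) = ((f n).1, (f n).2 + 1) := h
        rw [this]; simp; omega
  -- coordinates are monotone
  have hmono : ∀ i j, i ≤ j → j ≤ L → (f i).1 ≤ (f j).1 ∧ (f i).2 ≤ (f j).2 := by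
    intro i j hij
    induction j with
    | zero => intro _; have : i = 0 := Nat.le_zero.mp hij; subst this; exact ⟨le_rfl, le_rfl⟩
    | succ n ih =>
      intro hnL
      rcases Nat.lt_or_ge i (n+1) with h | h
      · have hin : i ≤ n := Nat.lt_succ_iff.mp h
        have ihn := ih hin (Nat.le_of_succ_le hnL)
        have hs := hstep n (Nat.lt_of_succ_le hnL)
        rcases hs with hh | hh
        · have : f (n+1) = ((f n).1 + 1, (f n).2) := hh
          rw [this]; exact ⟨le_trans ihn.1 (Nat.le_succ _), ihn.2⟩
        · have : f (n+1) = ((f n).1, (f n).2 + 1) := hh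
          rw [this]; exact ⟨ihn.1, le_trans ihn.2 (Nat.le_succ _)⟩
      · have : i = n+1 := le_antisymm hij h
        subst this; exact ⟨le_rfl, le_rfl⟩
  have hLsum : L = r.1 + r.2 := by
    have := hsum L le_rfl; rw [hL] at this; omega
  -- membership in the ball for late vertices
  have hball : ∀ k ≤ L, L - ρ ≤ k → f k ∈ qball r ρ := by
    intro k hkL hk
    have hm := hmono k L hkL le_rfl
    rw [hL] at hm
    have hks := hsum k hkL
    exact ⟨hm.1, hm.2, by omega⟩
  have hsub : ↑(Finset.Ico (L - ρ) L) ⊆ {k | k < L ∧ ballEdge r ρ (f k, f (k + 1))} := by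
    intro k hk
    simp only [Finset.coe_Ico, Set.mem_Ico] at hk
    refine ⟨hk.2, hstep k hk.2, hball k (Nat.le_of_lt hk.2) hk.1, hball (k+1) hk.2 (by omega)⟩
  calc ρ = (Finset.Ico (L - ρ) L).card := by rw [Nat.card_Ico]; omega
    _ = (↑(Finset.Ico (L - ρ) L) : Set ℕ).ncard := (Set.ncard_coe_finset _).symm
    _ ≤ _ := Set.ncard_le_ncard hsub (Set.Finite.subset (Set.finite_Iio L) (fun k hk => hk.1))
end

section
/- Let R'⊆{1,…,N} be a set of request indices such that for every two distinct i,j∈R' the quarter balls SQball(i) and SQball(j) are edge-disjoint. Then every feasible solution F satisfies |F| ≥ Σ_{i∈R'} ρ(i); in particular |opt| ≥ Σ_{i∈R'} ρ(i). -/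
open Finset

/-- Two quarter balls are edge-disjoint if they share no grid edge. -/
def BallsEdgeDisjoint (r : Replica) (ρ : ℕ) (r' : Replica) (ρ' : ℕ) : Prop :=
  ∀ e : GEdge, ¬ (ballEdge r ρ e ∧ ballEdge r' ρ' e)

/-- The square `Sq(r,ρ) = [v−ρ,v] × [t−ρ,t]`. -/
def SqRect (r : Replica) (ρ : ℕ) : Set Replica :=
  {q | r.1 - ρ ≤ q.1 ∧ q.1 ≤ r.1 ∧ r.2 - ρ ≤ q.2 ∧ q.2 ≤ r.2}

/-- Directed `L∞` distance `d∞(q,r)`: `max(v−u, t−s)` if `u ≤ v` and `s ≤ t`,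
and `∞` otherwise. -/
def distInf (q r : Replica) : ℕ∞ :=
  if q.1 ≤ r.1 ∧ q.2 ≤ r.2 then ((max (r.1 - q.1) (r.2 - q.2) : ℕ) : ℕ∞) else ⊤

/-- The replicas of an edge set: `(0,0)` together with all endpoints of its edges. -/
def Repl (F : Finset GEdge) : Set Replica :=
  insert ((0, 0) : Replica) {q | ∃ e ∈ F, q = e.1 ∨ q = e.2}

/-- The arcs of the vertical path at node `u` from time `s` to time `τ`. -/
def vertPath (u s τ : ℕ) : Finset GEdge :=
  (Finset.range (τ - s)).image (fun k => ((u, s + k), (u, s + k + 1)))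

/-- The horizontal edges of the path at time `τ` from node `u` to node `w`. -/
def horizPath (τ u w : ℕ) : Finset GEdge :=
  (Finset.range (w - u)).image (fun k => ((u + k, τ), (u + k + 1, τ)))

/-- A directed path from `a` to `b` all of whose edges belong to `F`. -/
def PathIn (F : Finset GEdge) (a b : Replica) : Prop :=
  ∃ (L : ℕ) (f : ℕ → Replica), f 0 = a ∧ f L = b ∧ ∀ k < L, (f k, f (k + 1)) ∈ F

/-- An execution of Algorithm `Square` on a request sequence
`r_1 = (v 1, t 1), …, r_N = (v N, t N)` (with `t 0 = 0` and nondecreasing times).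
`sol i` is the edge set after handling request `i`; `ρ i` is the radius of
request `i`; `(u' i, s' i)` is its closest replica and `(us i, ss i)` its
serving replica.  The fields record the specification SQ1–SQ5. -/
structure SquareRun where
  N : ℕ
  v : ℕ → ℕ
  t : ℕ → ℕ
  ρ : ℕ → ℕ
  u' : ℕ → ℕ
  s' : ℕ → ℕ
  us : ℕ → ℕ
  ss : ℕ → ℕ
  sol : ℕ → Finset GEdge
  t_zero : t 0 = 0
  t_mono : ∀ i j, i ≤ j → j ≤ N → t i ≤ t j
  sol_zero : sol 0 = ∅
  /-- SQ2: `ρ i` is a lower bound on the distance from every replica of the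
  current solution (after the SQ1 additions) to `r_i`. -/
  rho_min : ∀ i, 1 ≤ i → i ≤ N →
    ∀ q ∈ Repl (sol (i - 1) ∪ vertPath 0 (t (i - 1)) (t i)),
      (ρ i : ℕ∞) ≤ distInf q (v i, t i)
  /-- SQ2: the closest replica belongs to the current solution. -/
  closest_mem : ∀ i, 1 ≤ i → i ≤ N →
    (u' i, s' i) ∈ Repl (sol (i - 1) ∪ vertPath 0 (t (i - 1)) (t i))
  /-- SQ2: the closest replica attains the radius. -/
  closest_dist : ∀ i, 1 ≤ i → i ≤ N →
    distInf (u' i, s' i) (v i, t i) = (ρ i : ℕ∞)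
  /-- SQ2: among replicas of node `u' i`, the closest replica is the latest. -/
  closest_late : ∀ i, 1 ≤ i → i ≤ N → ∀ s, s ≤ t i →
    (u' i, s) ∈ Repl (sol (i - 1) ∪ vertPath 0 (t (i - 1)) (t i)) → s ≤ s' i
  /-- SQ3: the serving replica is in the current solution and in `Sq(r_i, 5ρ i)`. -/
  serv_mem : ∀ i, 1 ≤ i → i ≤ N →
    (us i, ss i) ∈ Repl (sol (i - 1) ∪ vertPath 0 (t (i - 1)) (t i)) ∧
      (us i, ss i) ∈ SqRect (v i, t i) (5 * ρ i)
  /-- SQ3: the serving node is leftmost. -/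
  serv_min : ∀ i, 1 ≤ i → i ≤ N →
    ∀ q ∈ Repl (sol (i - 1) ∪ vertPath 0 (t (i - 1)) (t i)),
      q ∈ SqRect (v i, t i) (5 * ρ i) → us i ≤ q.1
  /-- SQ3: among those, the serving time is latest. -/
  serv_late : ∀ i, 1 ≤ i → i ≤ N →
    ∀ q ∈ Repl (sol (i - 1) ∪ vertPath 0 (t (i - 1)) (t i)),
      q ∈ SqRect (v i, t i) (5 * ρ i) → q.1 = us i → q.2 ≤ ss i
  /-- SQ1 + SQ4 + SQ5: the edges added while handling request `i`. -/
  step : ∀ i, 1 ≤ i → i ≤ N →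
    sol i = (sol (i - 1) ∪ vertPath 0 (t (i - 1)) (t i))
      ∪ vertPath (us i) (ss i) (t i) ∪ horizPath (t i) (us i) (v i)
      ∪ vertPath (us i) (t i) (t i + 4 * ρ i)

namespace SquareRun

variable (S : SquareRun)

/-- The `i`-th request replica. -/
def req (i : ℕ) : Replica := (S.v i, S.t i)

/-- The edges added in steps SQ4 and SQ5 while handling request `i`. -/
def added45 (i : ℕ) : Finset GEdge :=
  vertPath (S.us i) (S.ss i) (S.t i) ∪ horizPath (S.t i) (S.us i) (S.v i)
    ∪ vertPath (S.us i) (S.t i) (S.t i + 4 * S.ρ i)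

/-- Request `i` is covered if `v_i − u^s_i ≥ ρ(i)`. -/
def covered (i : ℕ) : Prop := S.ρ i ≤ S.v i - S.us i

def uncovered (i : ℕ) : Prop := ¬ S.covered i

/-- A feasible solution of the DMCD instance given by the requests of `S`. -/
def Feasible (F : Finset GEdge) : Prop :=
  (∀ e ∈ F, isGridEdge e) ∧
  (∀ i, 1 ≤ i → i ≤ S.N → PathIn F (0, 0) (S.req i)) ∧
  (∀ τ, τ < S.t S.N → ∃ w, ((w, τ), (w, τ + 1)) ∈ F)

/-- `S.IsParent i j` means `parent(j) = i`:  `i` is the least index greater than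
`j` such that `r_i` is uncovered and `SQball(j)`, `SQball(i)` are not
edge-disjoint. -/
def IsParent (i j : ℕ) : Prop :=
  1 ≤ j ∧ j < i ∧ i ≤ S.N ∧ S.uncovered j ∧ S.uncovered i ∧
    ¬ BallsEdgeDisjoint (S.req j) (S.ρ j) (S.req i) (S.ρ i) ∧
    ∀ k, j < k → k < i → S.uncovered k →
      BallsEdgeDisjoint (S.req j) (S.ρ j) (S.req k) (S.ρ k)

/-- A root: an uncovered request with no parent. -/
def IsRoot (i : ℕ) : Prop :=
  1 ≤ i ∧ i ≤ S.N ∧ S.uncovered i ∧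
    ∀ j, i < j → j ≤ S.N → S.uncovered j →
      BallsEdgeDisjoint (S.req i) (S.ρ i) (S.req j) (S.ρ j)

/-- `i ∈ Tree(iStar)`: one can go from `i` to `iStar` by repeatedly passing from
a child to its parent. -/
def InTree (i iStar : ℕ) : Prop :=
  Relation.ReflTransGen (fun a b => S.IsParent b a) i iStar

end SquareRun

lemma grid_sum {e : GEdge} (h : isGridEdge e) :
    e.2.1 + e.2.2 = e.1.1 + e.1.2 + 1 ∧ e.1.1 ≤ e.2.1 ∧ e.1.2 ≤ e.2.2 := by
  rcases h with h | h
  · simp only [isHoriz] at h; rw [h]; simp; omega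
  · simp only [isArc] at h; rw [h]; simp; omega

open Classical in
lemma path_ball_edges (F : Finset GEdge) (hgrid : ∀ e ∈ F, isGridEdge e)
    (r : Replica) (ρ : ℕ) (hρ : ρ ≤ r.1 + r.2)
    (hp : PathIn F (0, 0) r) :
    ρ ≤ (F.filter (fun e => e.1 ∈ qball r ρ ∧ e.2 ∈ qball r ρ)).card := by
  obtain ⟨L, f, h0, hL, hmem⟩ := hp
  have hsum : ∀ k ≤ L, (f k).1 + (f k).2 = k := by
    intro k
    induction k with
    | zero => intro _; simp [h0]
    | succ n ih =>
      intro hk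
      have h1 := hmem n (by omega)
      have h2 := grid_sum (hgrid _ h1)
      have := ih (by omega)
      simp at h2
      omega
  have hLe : L = r.1 + r.2 := by have := hsum L le_rfl; rw [hL] at this; omega
  have hmono : ∀ k ≤ L, (f k).1 ≤ r.1 ∧ (f k).2 ≤ r.2 := by
    intro k hk
    have haux : ∀ m, k + m ≤ L → (f k).1 ≤ (f (k + m)).1 ∧ (f k).2 ≤ (f (k + m)).2 := by
      intro m
      induction m with
      | zero => intro _; simp
      | succ n ih =>
        intro hm
        have h1 := hmem (k + n) (by omega)
        have h2 := grid_sum (hgrid _ h1)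
        have := ih (by omega)
        simp at h2
        rw [show k + (n + 1) = (k + n) + 1 by omega]
        constructor <;> omega
    have := haux (L - k) (by omega)
    rw [show k + (L - k) = L by omega, hL] at this
    exact this
  set E := (Finset.range ρ).image (fun k => (f (L - ρ + k), f (L - ρ + k + 1))) with hE
  have hcard : E.card = ρ := by
    rw [hE, Finset.card_image_of_injOn, Finset.card_range]
    intro a ha b hb hab
    simp only [Finset.mem_coe, Finset.mem_range] at ha hb
    simp only [Prod.mk.injEq] at hab
    have h1 := hsum (L - ρ + a) (by omega)
    have h2 := hsum (L - ρ + b) (by omega)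
    rw [hab.1] at h1
    omega
  have hsubE : E ⊆ F.filter (fun e => e.1 ∈ qball r ρ ∧ e.2 ∈ qball r ρ) := by
    intro e he
    rw [hE, Finset.mem_image] at he
    obtain ⟨k, hk, rfl⟩ := he
    rw [Finset.mem_range] at hk
    have h1 := hmem (L - ρ + k) (by omega)
    have hs1 := hsum (L - ρ + k) (by omega)
    have hs2 := hsum (L - ρ + k + 1) (by omega)
    have hm1 := hmono (L - ρ + k) (by omega)
    have hm2 := hmono (L - ρ + k + 1) (by omega)
    refine Finset.mem_filter.mpr ⟨h1, ⟨hm1.1, hm1.2, ?_⟩, ⟨hm2.1, hm2.2, ?_⟩⟩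
    · show (r.1 - (f (L - ρ + k)).1) + (r.2 - (f (L - ρ + k)).2) ≤ ρ
      omega
    · show (r.1 - (f (L - ρ + k + 1)).1) + (r.2 - (f (L - ρ + k + 1)).2) ≤ ρ
      omega
  calc ρ = E.card := hcard.symm
    _ ≤ _ := Finset.card_le_card hsubE

/-- If the quarter balls of the requests indexed by `R'` are pairwise
edge-disjoint, then every feasible solution has at least `Σ_{i∈R'} ρ(i)` edges;
in particular `|opt| ≥ Σ_{i∈R'} ρ(i)`. -/
theorem feasible_ge_sum_radii (S : SquareRun) (R' : Finset ℕ)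
    (hsub : R' ⊆ Finset.Icc 1 S.N)
    (hdisj : ∀ i ∈ R', ∀ j ∈ R', i ≠ j →
      BallsEdgeDisjoint (S.req i) (S.ρ i) (S.req j) (S.ρ j)) :
    ∀ F : Finset GEdge, S.Feasible F → ∑ i ∈ R', S.ρ i ≤ F.card := by
  classical
  intro F hF
  obtain ⟨hgrid, hpath, _⟩ := hF
  set T : ℕ → Finset GEdge := fun i =>
    F.filter (fun e => e.1 ∈ qball (S.req i) (S.ρ i) ∧ e.2 ∈ qball (S.req i) (S.ρ i)) with hT
  have key : ∀ i ∈ R', S.ρ i ≤ (T i).card := by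
    intro i hi
    have hi' := hsub hi
    rw [Finset.mem_Icc] at hi'
    apply path_ball_edges F hgrid
    · have h0 : ((0, 0) : Replica) ∈
          Repl (S.sol (i - 1) ∪ vertPath 0 (S.t (i - 1)) (S.t i)) :=
        Set.mem_insert _ _
      have hb := S.rho_min i hi'.1 hi'.2 _ h0
      rw [distInf] at hb
      simp only [Nat.zero_le, and_self, if_true, Nat.sub_zero] at hb
      have := Nat.cast_le.mp hb
      show S.ρ i ≤ (S.req i).1 + (S.req i).2
      simp only [SquareRun.req]
      omega
    · exact hpath i hi'.1 hi'.2
  have hdisjT : ∀ i ∈ R', ∀ j ∈ R', i ≠ j → Disjoint (T i) (T j) := by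
    intro i hi j hj hij
    rw [Finset.disjoint_left]
    intro e hei hej
    rw [hT, Finset.mem_filter] at hei hej
    exact hdisj i hi j hj hij e
      ⟨⟨hgrid e hei.1, hei.2⟩, ⟨hgrid e hej.1, hej.2⟩⟩
  calc ∑ i ∈ R', S.ρ i ≤ ∑ i ∈ R', (T i).card := Finset.sum_le_sum key
    _ = (R'.biUnion T).card := (Finset.card_biUnion hdisjT).symm
    _ ≤ F.card := Finset.card_le_card (by
        intro e he
        rw [Finset.mem_biUnion] at he
        obtain ⟨i, _, hei⟩ := he
        exact (Finset.mem_filter.mp hei).1)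
end

section
/- If r_i and r_j are two distinct covered requests, then the quarter balls SQball(i) and SQball(j) are edge-disjoint. -/
open Finset

lemma sol_mono_aux (S : SquareRun) {a b : ℕ} (hab : a ≤ b) (hbN : b ≤ S.N) :
    S.sol a ⊆ S.sol b := by
  induction b with
  | zero =>
    have : a = 0 := by omega
    subst this; exact subset_rfl
  | succ n ih =>
    rcases Nat.lt_or_ge a (n + 1) with h | h
    · have hstep := S.step (n + 1) (by omega) hbN
      have hsub : S.sol n ⊆ S.sol (n + 1) := by
        rw [hstep]
        simp only [Nat.add_sub_cancel]
        intro x hx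
        simp only [Finset.mem_union]
        tauto
      exact (ih (by omega) (by omega)).trans hsub
    · have : a = n + 1 := by omega
      subst this; exact subset_rfl

lemma key_aux (S : SquareRun) {i j p1 p2 : ℕ} (hj1 : 1 ≤ j) (hji : j < i) (hiN : i ≤ S.N)
    (hcj : S.covered j)
    (hp1j : p1 ≤ S.v j) (hp2j : p2 ≤ S.t j)
    (hl1j : (S.v j - p1) + (S.t j - p2) ≤ S.ρ j)
    (hp1i : p1 ≤ S.v i) (hp2i : p2 ≤ S.t i)
    (hr : 1 ≤ S.ρ j)
    (hstrict : (S.v i - p1) + (S.t i - p2) < S.ρ i) : False := by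
  have hjN : j ≤ S.N := le_trans (le_of_lt hji) hiN
  have hsq := (S.serv_mem j hj1 hjN).2
  have husv : S.us j ≤ S.v j := hsq.2.1
  have hcov : S.ρ j ≤ S.v j - S.us j := hcj
  have hup1 : S.us j ≤ p1 := by omega
  -- (p1, t j) is a replica of sol j, via the horizontal path of step j
  obtain ⟨e', he'hp, hqe'⟩ :
      ∃ e' ∈ horizPath (S.t j) (S.us j) (S.v j),
        ((p1, S.t j) : Replica) = e'.1 ∨ ((p1, S.t j) : Replica) = e'.2 := by
    by_cases hc : p1 < S.v j
    · refine ⟨((p1, S.t j), (p1 + 1, S.t j)), ?_, Or.inl rfl⟩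
      simp only [horizPath, Finset.mem_image, Finset.mem_range]
      exact ⟨p1 - S.us j, by omega, by
        have : S.us j + (p1 - S.us j) = p1 := by omega
        rw [this]⟩
    · refine ⟨((p1 - 1, S.t j), (p1, S.t j)), ?_, Or.inr rfl⟩
      simp only [horizPath, Finset.mem_image, Finset.mem_range]
      exact ⟨p1 - 1 - S.us j, by omega, by
        have h1 : S.us j + (p1 - 1 - S.us j) = p1 - 1 := by omega
        have h2 : p1 - 1 + 1 = p1 := by omega
        rw [h1, h2]⟩
  have he'solj : e' ∈ S.sol j := by
    rw [S.step j hj1 hjN]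
    exact Finset.mem_union.mpr (Or.inl (Finset.mem_union.mpr (Or.inr he'hp)))
  have he'sol : e' ∈ S.sol (i - 1) ∪ vertPath 0 (S.t (i - 1)) (S.t i) :=
    Finset.mem_union.mpr (Or.inl (sol_mono_aux S (by omega) (by omega) he'solj))
  have hqmem : ((p1, S.t j) : Replica) ∈
      Repl (S.sol (i - 1) ∪ vertPath 0 (S.t (i - 1)) (S.t i)) :=
    Set.mem_insert_iff.mpr (Or.inr ⟨e', he'sol, hqe'⟩)
  have hmin := S.rho_min i (by omega) hiN _ hqmem
  have htji : S.t j ≤ S.t i := S.t_mono j i (le_of_lt hji) hiN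
  rw [distInf, if_pos ⟨hp1i, htji⟩] at hmin
  have hle : S.ρ i ≤ max (S.v i - p1) (S.t i - S.t j) := by exact_mod_cast hmin
  rcases le_max_iff.mp hle with h | h <;> omega

lemma key (S : SquareRun) {i j : ℕ} (hj1 : 1 ≤ j) (hji : j < i) (hiN : i ≤ S.N)
    (hcj : S.covered j) :
    BallsEdgeDisjoint (S.req j) (S.ρ j) (S.req i) (S.ρ i) := by
  rintro e ⟨⟨hg, hj1e, hj2e⟩, ⟨-, hi1e, hi2e⟩⟩
  simp only [qball, SquareRun.req, Set.mem_setOf_eq] at hj1e hj2e hi1e hi2e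
  obtain ⟨hja1, hja2, hja3⟩ := hj1e
  obtain ⟨hjb1, hjb2, hjb3⟩ := hj2e
  obtain ⟨hia1, hia2, hia3⟩ := hi1e
  obtain ⟨hib1, hib2, hib3⟩ := hi2e
  rcases hg with hh | hv
  · rw [hh] at hjb1 hjb2 hjb3 hib1 hib2 hib3
    simp only at hjb1 hjb2 hjb3 hib1 hib2 hib3
    exact key_aux S (p1 := e.1.1 + 1) (p2 := e.1.2) hj1 hji hiN hcj
      hjb1 hjb2 hjb3 hib1 hib2 (by omega) (by omega)
  · rw [hv] at hjb1 hjb2 hjb3 hib1 hib2 hib3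
    simp only at hjb1 hjb2 hjb3 hib1 hib2 hib3
    exact key_aux S (p1 := e.1.1) (p2 := e.1.2 + 1) hj1 hji hiN hcj
      hjb1 hjb2 hjb3 hib1 hib2 (by omega) (by omega)

/-- The quarter balls of two distinct covered requests are edge-disjoint. -/
theorem covered_balls_disjoint (S : SquareRun) (i j : ℕ)
    (hi1 : 1 ≤ i) (hiN : i ≤ S.N) (hj1 : 1 ≤ j) (hjN : j ≤ S.N)
    (hci : S.covered i) (hcj : S.covered j) (hij : i ≠ j) :
    BallsEdgeDisjoint (S.req i) (S.ρ i) (S.req j) (S.ρ j) := by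
  rcases Nat.lt_or_ge j i with h | h
  · exact fun e he => key S hj1 h hiN hcj e ⟨he.2, he.1⟩
  · have hij' : i < j := by omega
    exact key S hi1 hij' hjN hci
end

section
/- If request r_i is uncovered, then its radius is determined by the time difference from its closest replica: ρ(i) = t_i − s'_i. -/
open Finset

/-- For an uncovered request, the radius equals the time difference from its
closest replica: `ρ(i) = t_i − s'_i`. -/
theorem uncovered_radius_eq_time (S : SquareRun) (i : ℕ)
    (hi1 : 1 ≤ i) (hiN : i ≤ S.N) (hu : S.uncovered i) :
    S.ρ i = S.t i - S.s' i := by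
  have hd := S.closest_dist i hi1 hiN
  unfold distInf at hd
  split_ifs at hd with hc
  · have hmax : max (S.v i - S.u' i) (S.t i - S.s' i) = S.ρ i := by
      exact_mod_cast hd
    obtain ⟨hu', hs'⟩ := hc
    have h1 : S.v i - S.u' i ≤ S.ρ i := hmax ▸ le_max_left _ _
    have h2 : S.t i - S.s' i ≤ S.ρ i := hmax ▸ le_max_right _ _
    rcases max_choice (S.v i - S.u' i) (S.t i - S.s' i) with h | h
    · -- v - u' = ρ, derive contradiction with uncovered
      rw [h] at hmax
      exfalso
      apply hu
      have hmem := S.closest_mem i hi1 hiN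
      have hsq : ((S.u' i, S.s' i) : Replica) ∈ SqRect (S.v i, S.t i) (5 * S.ρ i) := by
        constructor
        · simp only; omega
        refine ⟨hu', ?_, hs'⟩
        simp only; omega
      have := S.serv_min i hi1 hiN _ hmem hsq
      simp only at this
      unfold SquareRun.covered
      omega
    · rw [h] at hmax; omega
  · exact absurd hd (by simp)
end

section
/- For every request r_i, no replica (w,s) with v_i−5ρ(i) ≤ w < u^s_i and t_i−5ρ(i) ≤ s ≤ t_i is a replica of the solution Square(i). -/
open Finset

/-- No replica of the rectangle `[v_i−5ρ(i), u^s_i−1] × [t_i−5ρ(i), t_i]`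
belongs to the solution `Square(i)`. -/
theorem no_replica_in_left_rectangle (S : SquareRun) (i : ℕ)
    (hi1 : 1 ≤ i) (hiN : i ≤ S.N) (w s : ℕ)
    (hw1 : S.v i - 5 * S.ρ i ≤ w) (hw2 : w < S.us i)
    (hs1 : S.t i - 5 * S.ρ i ≤ s) (hs2 : s ≤ S.t i) :
    (w, s) ∉ Repl (S.sol i) := by
  intro hmem
  have husv : S.us i ≤ S.v i := (S.serv_mem i hi1 hiN).2.2.1
  have key : (w, s) ∉ Repl (S.sol (i - 1) ∪ vertPath 0 (S.t (i - 1)) (S.t i)) := by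
    intro h
    have := S.serv_min i hi1 hiN (w, s) h ⟨hw1, by omega, hs1, hs2⟩
    omega
  rcases hmem with h | ⟨e, he, hq⟩
  · exact key (by rw [show ((w, s) : Replica) = (0, 0) from h]; exact Set.mem_insert _ _)
  · rw [S.step i hi1 hiN] at he
    simp only [Finset.mem_union] at he
    rcases he with (((he | he) | he) | he) | he
    · exact key (Set.mem_insert_iff.mpr (Or.inr ⟨e, Finset.mem_union.mpr (Or.inl he), hq⟩))
    · exact key (Set.mem_insert_iff.mpr (Or.inr ⟨e, Finset.mem_union.mpr (Or.inr he), hq⟩))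
    · simp only [vertPath, Finset.mem_image, Finset.mem_range] at he
      obtain ⟨k, -, rfl⟩ := he
      rcases hq with h | h <;> simp_all <;> omega
    · simp only [horizPath, Finset.mem_image, Finset.mem_range] at he
      obtain ⟨k, -, rfl⟩ := he
      rcases hq with h | h <;> simp_all <;> omega
    · simp only [vertPath, Finset.mem_image, Finset.mem_range] at he
      obtain ⟨k, -, rfl⟩ := he
      rcases hq with h | h <;> simp_all <;> omega
end

section
/- Let r_i be a request and suppose its closest replica q'_i=(u'_i,s'_i) is first added to Square's solution while Square handles request r_j for some j<i (that is, q'_i is a replica of Square(j) but not of Square(j−1)). Then s'_i ≥ t_j. -/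
open Finset

lemma Repl_mono {F G : Finset GEdge} (h : F ⊆ G) : Repl F ⊆ Repl G := by
  intro q hq
  rcases hq with h0 | ⟨e, he, hq⟩
  · exact Or.inl h0
  · exact Or.inr ⟨e, h he, hq⟩

lemma mem_Repl_of_edge {F : Finset GEdge} {e : GEdge} (he : e ∈ F) (q : Replica)
    (hq : q = e.1 ∨ q = e.2) : q ∈ Repl F := Or.inr ⟨e, he, hq⟩

lemma SquareRun.sol_mono (S : SquareRun) : ∀ j k, j ≤ k → k ≤ S.N → S.sol j ⊆ S.sol k := by
  intro j k hjk hkN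
  induction k with
  | zero =>
    have : j = 0 := Nat.le_zero.mp hjk
    subst this; exact subset_rfl
  | succ n ih =>
    rcases Nat.lt_or_ge j (n + 1) with h | h
    · have hstep := S.step (n + 1) (by omega) hkN
      have hsub : S.sol n ⊆ S.sol (n + 1) := by
        rw [hstep]
        simp only [Nat.add_sub_cancel]
        intro e he
        simp only [Finset.mem_union]
        tauto
      exact (ih (by omega) (by omega)).trans hsub
    · have : j = n + 1 := by omega
      subst this; exact subset_rfl

/-- top endpoint of a nonempty vertical path -/
lemma top_mem_vertPath (u a τ : ℕ) (h : a < τ) :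
    ((u, τ - 1), (u, τ)) ∈ vertPath u a τ := by
  simp only [vertPath, Finset.mem_image, Finset.mem_range]
  refine ⟨τ - a - 1, by omega, ?_⟩
  simp only [Prod.mk.injEq]
  exact ⟨⟨trivial, by omega⟩, trivial, by omega⟩

/-- If the closest replica of request `i` is first added while Square handles
request `j < i`, then `s'_i ≥ t_j`. -/
theorem closest_replica_time_ge (S : SquareRun) (i j : ℕ)
    (hi1 : 1 ≤ i) (hiN : i ≤ S.N) (hj1 : 1 ≤ j) (hji : j < i)
    (hmem : (S.u' i, S.s' i) ∈ Repl (S.sol j))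
    (hnot : (S.u' i, S.s' i) ∉ Repl (S.sol (j - 1))) :
    S.t j ≤ S.s' i := by
  -- general facts
  have htji : S.t j ≤ S.t i := S.t_mono j i (le_of_lt hji) hiN
  have hjN : j ≤ S.N := le_trans (le_of_lt hji) hiN
  have hsolsub : S.sol j ⊆ S.sol (i - 1) := S.sol_mono j (i - 1) (by omega) (by omega)
  have hfin : ∀ u, (u, S.t j) ∈ Repl (S.sol j) → u = S.u' i → S.t j ≤ S.s' i := by
    intro u hu hui
    subst hui
    have hmem' : (S.u' i, S.t j) ∈ Repl (S.sol (i - 1) ∪ vertPath 0 (S.t (i - 1)) (S.t i)) :=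
      Repl_mono (hsolsub.trans Finset.subset_union_left) hu
    exact S.closest_late i hi1 hiN (S.t j) htji hmem'
  -- unfold membership
  rcases hmem with h0 | ⟨e, he, hq⟩
  · exact absurd (Or.inl h0) hnot
  rw [S.step j hj1 hjN] at he
  simp only [Finset.mem_union] at he
  rcases he with (((he | he) | he) | he) | he
  · exact absurd (mem_Repl_of_edge he _ hq) hnot
  · -- SQ1 path at node 0
    simp only [vertPath, Finset.mem_image, Finset.mem_range] at he
    obtain ⟨k, hk, hek⟩ := he
    subst hek
    have h01 : S.u' i = 0 ∧ S.s' i ≤ S.t j := by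
      rcases hq with hq | hq <;>
        (simp only [Prod.mk.injEq] at hq; omega)
    have htop := top_mem_vertPath 0 (S.t (j - 1)) (S.t j) (by omega)
    have htop' : ((0, S.t j) : Replica) ∈ Repl (S.sol j) := by
      apply mem_Repl_of_edge (F := S.sol j) (e := ((0, S.t j - 1), (0, S.t j)))
      · rw [S.step j hj1 hjN]
        simp only [Finset.mem_union]
        left; left; left; right; exact htop
      · right; rfl
    exact hfin 0 htop' h01.1.symm
  · -- SQ4 vertical path
    simp only [vertPath, Finset.mem_image, Finset.mem_range] at he
    obtain ⟨k, hk, hek⟩ := he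
    subst hek
    have h01 : S.u' i = S.us j := by
      rcases hq with hq | hq <;>
        (simp only [Prod.mk.injEq] at hq; omega)
    have htop := top_mem_vertPath (S.us j) (S.ss j) (S.t j) (by omega)
    have htop' : ((S.us j, S.t j) : Replica) ∈ Repl (S.sol j) := by
      apply mem_Repl_of_edge (F := S.sol j) (e := ((S.us j, S.t j - 1), (S.us j, S.t j)))
      · rw [S.step j hj1 hjN]
        simp only [Finset.mem_union]
        left; left; right; exact htop
      · right; rfl
    exact hfin (S.us j) htop' h01.symm
  · -- SQ4 horizontal path: time is exactly t j
    simp only [horizPath, Finset.mem_image, Finset.mem_range] at he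
    obtain ⟨k, hk, hek⟩ := he
    subst hek
    rcases hq with hq | hq <;>
      (simp only [Prod.mk.injEq] at hq; omega)
  · -- SQ5 vertical path: time ≥ t j
    simp only [vertPath, Finset.mem_image, Finset.mem_range] at he
    obtain ⟨k, hk, hek⟩ := he
    subst hek
    rcases hq with hq | hq <;>
      (simp only [Prod.mk.injEq] at hq; omega)
end

section
/- If there exists a replica (w,t_i) of the solution Square(i−1) with w ≤ v_i and v_i−w ≤ 5ρ(i), then request r_i is covered. -/
open Finset

/-- If `Square(i−1)` has a replica `(w, t_i)` with `0 ≤ v_i − w ≤ 5ρ(i)`, then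
request `r_i` is covered. -/
theorem covered_of_nearby_replica (S : SquareRun) (i : ℕ)
    (hi1 : 1 ≤ i) (hiN : i ≤ S.N)
    (h : ∃ w, w ≤ S.v i ∧ S.v i - w ≤ 5 * S.ρ i ∧
      (w, S.t i) ∈ Repl (S.sol (i - 1))) :
    S.covered i := by
  obtain ⟨w, hw1, hw2, hw3⟩ := h
  have hmem : (w, S.t i) ∈ Repl (S.sol (i-1) ∪ vertPath 0 (S.t (i-1)) (S.t i)) := by
    rcases hw3 with h0 | ⟨e, he, hq⟩
    · exact Set.mem_insert_iff.mpr (Or.inl h0)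
    · exact Set.mem_insert_iff.mpr (Or.inr ⟨e, Finset.mem_union_left _ he, hq⟩)
  have hSq : (w, S.t i) ∈ SqRect (S.v i, S.t i) (5 * S.ρ i) :=
    ⟨by omega, hw1, by omega, le_rfl⟩
  have hus := S.serv_min i hi1 hiN _ hmem hSq
  have hrho := S.rho_min i hi1 hiN _ hmem
  have h1 : (S.ρ i : ℕ∞) ≤ ((max (S.v i - w) (S.t i - S.t i) : ℕ) : ℕ∞) := by
    simpa [distInf, hw1] using hrho
  have h2 : S.ρ i ≤ S.v i - w := by
    have := Nat.cast_le.mp h1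
    omega
  simp only [SquareRun.covered]
  omega
end

section
/- Let r_i and r_j be two uncovered requests with i>j, and suppose the quarter balls SQball(i) and SQball(j) are not edge-disjoint. Then (P1) ρ(i) ≥ 4·ρ(j), and (P2) v_j−ρ(j) ≤ v_i < u^s_j ≤ v_j. -/
open Finset

section Helpers

lemma mem_Repl_iff {F : Finset GEdge} {q : Replica} :
    q ∈ Repl F ↔ q = ((0, 0) : Replica) ∨ ∃ e ∈ F, q = e.1 ∨ q = e.2 := by
  simp [Repl, Set.mem_insert_iff]

lemma Repl_union {F G : Finset GEdge} {q : Replica} :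
    q ∈ Repl (F ∪ G) ↔ q ∈ Repl F ∨ q ∈ Repl G := by
  simp only [mem_Repl_iff, Finset.mem_union]
  constructor
  · rintro (h | ⟨e, (he | he), h2⟩)
    · exact Or.inl (Or.inl h)
    · exact Or.inl (Or.inr ⟨e, he, h2⟩)
    · exact Or.inr (Or.inr ⟨e, he, h2⟩)
  · rintro ((h | ⟨e, he, h2⟩) | (h | ⟨e, he, h2⟩))
    · exact Or.inl h
    · exact Or.inr ⟨e, Or.inl he, h2⟩
    · exact Or.inl h
    · exact Or.inr ⟨e, Or.inr he, h2⟩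

lemma mem_Repl_vertPath' {u s τ a b : ℕ} (hq : ((a, b) : Replica) ∈ Repl (vertPath u s τ)) :
    (a = 0 ∧ b = 0) ∨ (a = u ∧ s ≤ b ∧ b ≤ τ ∧ s < τ) := by
  rw [mem_Repl_iff] at hq
  rcases hq with h | ⟨e, he, hq⟩
  · rw [Prod.mk.injEq] at h
    exact Or.inl h
  · right
    simp only [vertPath, Finset.mem_image, Finset.mem_range] at he
    obtain ⟨k, hk, rfl⟩ := he
    rcases hq with h | h <;> rw [Prod.mk.injEq] at h <;>
      exact ⟨h.1, by omega, by omega, by omega⟩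

lemma vertPath_repl {u s τ c : ℕ} (h1 : s ≤ c) (h2 : c ≤ τ) (h3 : s < τ) :
    ((u, c) : Replica) ∈ Repl (vertPath u s τ) := by
  rw [mem_Repl_iff]; right
  by_cases h : c < τ
  · refine ⟨((u, s + (c - s)), (u, s + (c - s) + 1)), ?_, ?_⟩
    · simp only [vertPath, Finset.mem_image, Finset.mem_range]
      exact ⟨c - s, by omega, rfl⟩
    · left
      have hc : s + (c - s) = c := by omega
      rw [hc]
  · have hc : c = τ := by omega
    refine ⟨((u, s + (c - 1 - s)), (u, s + (c - 1 - s) + 1)), ?_, ?_⟩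
    · simp only [vertPath, Finset.mem_image, Finset.mem_range]
      exact ⟨c - 1 - s, by omega, rfl⟩
    · right
      have hcc : s + (c - 1 - s) + 1 = c := by omega
      rw [hcc]

lemma mem_Repl_horizPath' {τ u w a b : ℕ} (hq : ((a, b) : Replica) ∈ Repl (horizPath τ u w)) :
    (a = 0 ∧ b = 0) ∨ (u ≤ a ∧ a ≤ w ∧ b = τ ∧ u < w) := by
  rw [mem_Repl_iff] at hq
  rcases hq with h | ⟨e, he, hq⟩
  · rw [Prod.mk.injEq] at h
    exact Or.inl h
  · right
    simp only [horizPath, Finset.mem_image, Finset.mem_range] at he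
    obtain ⟨k, hk, rfl⟩ := he
    rcases hq with h | h <;> rw [Prod.mk.injEq] at h <;>
      exact ⟨by omega, by omega, h.2, by omega⟩

lemma horizPath_repl {τ u w x : ℕ} (h1 : u ≤ x) (h2 : x ≤ w) (h3 : u < w) :
    ((x, τ) : Replica) ∈ Repl (horizPath τ u w) := by
  rw [mem_Repl_iff]; right
  by_cases h : x < w
  · refine ⟨((u + (x - u), τ), (u + (x - u) + 1, τ)), ?_, ?_⟩
    · simp only [horizPath, Finset.mem_image, Finset.mem_range]
      exact ⟨x - u, by omega, rfl⟩
    · left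
      have hc : u + (x - u) = x := by omega
      rw [hc]
  · have hc : x = w := by omega
    refine ⟨((u + (x - 1 - u), τ), (u + (x - 1 - u) + 1, τ)), ?_, ?_⟩
    · simp only [horizPath, Finset.mem_image, Finset.mem_range]
      exact ⟨x - 1 - u, by omega, rfl⟩
    · right
      have hcc : u + (x - 1 - u) + 1 = x := by omega
      rw [hcc]

lemma mem_SqRect {v t ρ a b : ℕ} (h1 : v - ρ ≤ a) (h2 : a ≤ v) (h3 : t - ρ ≤ b) (h4 : b ≤ t) :
    ((a, b) : Replica) ∈ SqRect (v, t) ρ := ⟨h1, h2, h3, h4⟩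

lemma SqRect_elim {v t ρ a b : ℕ} (h : ((a, b) : Replica) ∈ SqRect (v, t) ρ) :
    v - ρ ≤ a ∧ a ≤ v ∧ t - ρ ≤ b ∧ b ≤ t := h

lemma qball_elim {v t ρ : ℕ} {q : Replica} (h : q ∈ qball (v, t) ρ) :
    q.1 ≤ v ∧ q.2 ≤ t ∧ (v - q.1) + (t - q.2) ≤ ρ := h

lemma distInf_pair (u s v t : ℕ) (h1 : u ≤ v) (h2 : s ≤ t) :
    distInf (u, s) (v, t) = ((max (v - u) (t - s) : ℕ) : ℕ∞) := by
  simp [distInf, h1, h2]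

lemma rho_min_nat {ρ u s v t : ℕ} (h : (ρ : ℕ∞) ≤ distInf (u, s) (v, t))
    (h1 : u ≤ v) (h2 : s ≤ t) : ρ ≤ v - u ∨ ρ ≤ t - s := by
  rw [distInf_pair u s v t h1 h2] at h
  have h' : ρ ≤ max (v - u) (t - s) := by exact_mod_cast h
  exact le_max_iff.mp h'

end Helpers
section Helpers2

lemma closest_nat (S : SquareRun) (i : ℕ) (h1 : 1 ≤ i) (h2 : i ≤ S.N) :
    S.u' i ≤ S.v i ∧ S.s' i ≤ S.t i ∧ S.v i - S.u' i ≤ S.ρ i ∧ S.t i - S.s' i ≤ S.ρ i := by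
  have h := S.closest_dist i h1 h2
  by_cases hc : S.u' i ≤ S.v i ∧ S.s' i ≤ S.t i
  · rw [distInf_pair _ _ _ _ hc.1 hc.2] at h
    have h' : max (S.v i - S.u' i) (S.t i - S.s' i) = S.ρ i := by exact_mod_cast h
    exact ⟨hc.1, hc.2, le_of_le_of_eq (le_max_left _ _) h',
      le_of_le_of_eq (le_max_right _ _) h'⟩
  · unfold distInf at h
    rw [if_neg hc] at h
    exact absurd h.symm (ENat.coe_ne_top _)

lemma sol_subset (S : SquareRun) : ∀ b ≤ S.N, ∀ a ≤ b, S.sol a ⊆ S.sol b := by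
  intro b
  induction b with
  | zero =>
    intro _ a ha
    have h : a = 0 := by omega
    rw [h]
  | succ b ih =>
    intro hbN a ha
    rcases Nat.eq_or_lt_of_le ha with h | h
    · rw [h]
    · have h1 : S.sol a ⊆ S.sol b := ih (by omega) a (by omega)
      refine h1.trans ?_
      rw [S.step (b + 1) (by omega) hbN]
      intro e he
      exact Finset.mem_union_left _ (Finset.mem_union_left _ (Finset.mem_union_left _
        (Finset.mem_union_left _ he)))

lemma repl_cross (S : SquareRun) : ∀ k ≤ S.N, ∀ u s τ, ((u, s) : Replica) ∈ Repl (S.sol k) →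
    S.t k ≤ τ → τ ≤ s → ((u, τ) : Replica) ∈ Repl (S.sol k) := by
  intro k
  induction k with
  | zero =>
    intro _ u s τ hq ht1 ht2
    rw [S.sol_zero] at hq ⊢
    rw [mem_Repl_iff] at hq ⊢
    rcases hq with h | ⟨e, he, _⟩
    · rw [Prod.mk.injEq] at h
      left
      rw [Prod.mk.injEq]
      have ht0 := S.t_zero
      exact ⟨h.1, by omega⟩
    · simp at he
  | succ k ih =>
    intro hkN u s τ hq ht1 ht2
    have htk : S.t k ≤ S.t (k + 1) := S.t_mono k (k + 1) (by omega) hkN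
    rw [S.step (k + 1) (by omega) hkN] at hq ⊢
    rw [Repl_union, Repl_union, Repl_union, Repl_union] at hq ⊢
    rcases hq with ((((hA | hB) | hC) | hD) | hE)
    · exact Or.inl (Or.inl (Or.inl (Or.inl (ih (by omega) u s τ hA (by omega) ht2))))
    · rcases mem_Repl_vertPath' hB with h | h
      · -- (u,s) = (0,0) : s = 0 so τ = 0 and t (k+1) = 0
        left; left; left; right
        have hts : τ = s := by omega
        rw [hts]
        exact hB
      · -- s ≤ t (k+1) ≤ τ ≤ s : τ = s
        have : τ = s := by omega
        rw [this]
        exact Or.inl (Or.inl (Or.inl (Or.inr hB)))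
    · rcases mem_Repl_vertPath' hC with h | h
      · left; left; right
        have hts : τ = s := by omega
        rw [hts]; exact hC
      · have : τ = s := by omega
        rw [this]
        exact Or.inl (Or.inl (Or.inr hC))
    · rcases mem_Repl_horizPath' hD with h | h
      · left; right
        have hts : τ = s := by omega
        rw [hts]; exact hD
      · have : τ = s := by omega
        rw [this]
        exact Or.inl (Or.inr hD)
    · rcases mem_Repl_vertPath' hE with h | h
      · right
        have hts : τ = s := by omega
        rw [hts]; exact hE
      · right
        rw [h.1]
        exact vertPath_repl (by omega) (by omega) (by omega)

lemma col0_repl (S : SquareRun) : ∀ k ≤ S.N, ∀ c ≤ S.t k, ((0, c) : Replica) ∈ Repl (S.sol k) := by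
  intro k
  induction k with
  | zero =>
    intro _ c hc
    have ht0 := S.t_zero
    have : c = 0 := by omega
    rw [this, mem_Repl_iff]
    exact Or.inl rfl
  | succ k ih =>
    intro hkN c hc
    rcases le_or_gt c (S.t k) with h | h
    · exact Repl_mono (sol_subset S (k + 1) hkN k (by omega)) (ih (by omega) c h)
    · rw [S.step (k + 1) (by omega) hkN]
      simp only [Nat.add_sub_cancel]
      rw [Repl_union, Repl_union, Repl_union, Repl_union]
      exact Or.inl (Or.inl (Or.inl (Or.inr (vertPath_repl (by omega) hc (by omega)))))

lemma col0' (S : SquareRun) (m : ℕ) (h1 : 1 ≤ m) (h2 : m ≤ S.N) (c : ℕ) (hc : c ≤ S.t m) :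
    ((0, c) : Replica) ∈ Repl (S.sol (m - 1) ∪ vertPath 0 (S.t (m - 1)) (S.t m)) := by
  rw [Repl_union]
  rcases le_or_gt c (S.t (m - 1)) with h | h
  · exact Or.inl (col0_repl S (m - 1) (by omega) c h)
  · exact Or.inr (vertPath_repl (by omega) hc (by omega))

lemma col_repl (S : SquareRun) (m : ℕ) (h1 : 1 ≤ m) (h2 : m ≤ S.N) (hρ : 1 ≤ S.ρ m)
    (τ : ℕ) (ha : S.t m ≤ τ) (hb : τ ≤ S.t m + 4 * S.ρ m) :
    ((S.us m, τ) : Replica) ∈ Repl (S.sol m) := by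
  rw [S.step m h1 h2, Repl_union]
  exact Or.inr (vertPath_repl ha hb (by omega))

lemma row_repl (S : SquareRun) (m : ℕ) (h1 : 1 ≤ m) (h2 : m ≤ S.N)
    (w : ℕ) (ha : S.us m ≤ w) (hb : w ≤ S.v m)
    (hne : S.us m < S.v m ∨ S.ss m < S.t m ∨ 1 ≤ S.ρ m) :
    ((w, S.t m) : Replica) ∈ Repl (S.sol m) := by
  rw [S.step m h1 h2]
  rw [Repl_union, Repl_union, Repl_union, Repl_union]
  by_cases hlt : S.us m < S.v m
  · exact Or.inl (Or.inr (horizPath_repl ha hb hlt))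
  · have hw : w = S.us m := by omega
    rw [hw]
    rcases hne with h | h | h
    · omega
    · exact Or.inl (Or.inl (Or.inr (vertPath_repl (le_of_lt h) le_rfl h)))
    · exact Or.inr (vertPath_repl le_rfl (by omega) (by omega))

lemma into_cur (S : SquareRun) {i m : ℕ} (him : m ≤ i - 1) (hiN : i ≤ S.N) {q : Replica}
    (hq : q ∈ Repl (S.sol m)) :
    q ∈ Repl (S.sol (i - 1) ∪ vertPath 0 (S.t (i - 1)) (S.t i)) :=
  Repl_union.mpr (Or.inl (Repl_mono (sol_subset S (i - 1) (by omega) m him) hq))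

end Helpers2

set_option maxHeartbeats 2000000 in
/-- If the quarter balls of two uncovered requests `r_i, r_j` (with `i > j`) are
not edge-disjoint, then (P1) `ρ(i) ≥ 4ρ(j)` and
(P2) `v_j − ρ(j) ≤ v_i < u^s_j ≤ v_j`. -/
theorem uncovered_not_disjoint_props (S : SquareRun) (i j : ℕ)
    (hj1 : 1 ≤ j) (hji : j < i) (hiN : i ≤ S.N)
    (hui : S.uncovered i) (huj : S.uncovered j)
    (hnd : ¬ BallsEdgeDisjoint (S.req i) (S.ρ i) (S.req j) (S.ρ j)) :
    4 * S.ρ j ≤ S.ρ i ∧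
      (S.v j - S.ρ j ≤ S.v i ∧ S.v i < S.us j ∧ S.us j ≤ S.v j) := by
  have hi1 : 1 ≤ i := by omega
  have hjN : j ≤ S.N := by omega
  -- uncovered unfolded
  have hui' : ¬ (S.ρ i ≤ S.v i - S.us i) := hui
  have huj' : ¬ (S.ρ j ≤ S.v j - S.us j) := huj
  have hρi1 : 1 ≤ S.ρ i := by
    by_contra h
    exact hui' (by omega)
  have hρj1 : 1 ≤ S.ρ j := by
    by_contra h
    exact huj' (by omega)
  -- serving squares
  have hsqi : S.v i - 5 * S.ρ i ≤ S.us i ∧ S.us i ≤ S.v i ∧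
      S.t i - 5 * S.ρ i ≤ S.ss i ∧ S.ss i ≤ S.t i :=
    SqRect_elim (S.serv_mem i hi1 hiN).2
  have hsqj : S.v j - 5 * S.ρ j ≤ S.us j ∧ S.us j ≤ S.v j ∧
      S.t j - 5 * S.ρ j ≤ S.ss j ∧ S.ss j ≤ S.t j :=
    SqRect_elim (S.serv_mem j hj1 hjN).2
  -- ball-intersection facts
  unfold BallsEdgeDisjoint at hnd
  push_neg at hnd
  obtain ⟨e, hei, hej⟩ := hnd
  have hzi : e.1.1 ≤ S.v i ∧ e.1.2 ≤ S.t i ∧ (S.v i - e.1.1) + (S.t i - e.1.2) ≤ S.ρ i :=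
    qball_elim (show e.1 ∈ qball (S.v i, S.t i) (S.ρ i) from hei.2.1)
  have hzj : e.1.1 ≤ S.v j ∧ e.1.2 ≤ S.t j ∧ (S.v j - e.1.1) + (S.t j - e.1.2) ≤ S.ρ j :=
    qball_elim (show e.1 ∈ qball (S.v j, S.t j) (S.ρ j) from hej.2.1)
  have htji : S.t j ≤ S.t i := S.t_mono j i (by omega) hiN
  have hA1 : S.t i ≤ S.t j + S.ρ i := by omega
  have hA2 : S.v i ≤ S.v j + S.ρ i := by omega
  have hA3 : S.v j ≤ S.v i + S.ρ j := by omega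
  -- column 0 at time t i
  have h0ti : ((0, S.t i) : Replica) ∈ Repl (S.sol (i - 1) ∪ vertPath 0 (S.t (i - 1)) (S.t i)) :=
    col0' S i hi1 hiN (S.t i) le_rfl
  have hρvi : S.ρ i ≤ S.v i := by
    have h := rho_min_nat (S.rho_min i hi1 hiN _ h0ti) (Nat.zero_le _) le_rfl
    omega
  have hρvi' : S.ρ i < S.v i := by
    rcases Nat.lt_or_ge (S.ρ i) (S.v i) with h | h
    · exact h
    · exfalso
      have hsq : ((0, S.t i) : Replica) ∈ SqRect (S.v i, S.t i) (5 * S.ρ i) :=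
      mem_SqRect (by omega) (by omega) (by omega) le_rfl
      have hmin : S.us i ≤ 0 := S.serv_min i hi1 hiN _ h0ti hsq
      omega
  -- P2 : v i < us j
  have hP2 : S.v i < S.us j := by
    by_contra hcon
    push_neg at hcon
    have key : ∀ τ, S.t j ≤ τ → τ ≤ S.t j + 4 * S.ρ j → τ ≤ S.t i → S.t i < τ + S.ρ i →
        False := by
      intro τ hτ1 hτ2 hτ3 hτ4
      have hp : ((S.us j, τ) : Replica) ∈
          Repl (S.sol (i - 1) ∪ vertPath 0 (S.t (i - 1)) (S.t i)) :=
        into_cur S (by omega) hiN (col_repl S j hj1 hjN hρj1 τ hτ1 hτ2)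
      by_cases hsp : S.v i ≤ S.us j + 5 * S.ρ i
      · have hsq : ((S.us j, τ) : Replica) ∈ SqRect (S.v i, S.t i) (5 * S.ρ i) :=
          mem_SqRect (by omega) hcon (by omega) hτ3
        have hmin : S.us i ≤ S.us j := S.serv_min i hi1 hiN _ hp hsq
        have hrho := rho_min_nat (S.rho_min i hi1 hiN _ hp) hcon hτ3
        rcases hrho with h | h <;> omega
      · have hw : ((S.v i - S.ρ i, S.t j) : Replica) ∈
            Repl (S.sol (i - 1) ∪ vertPath 0 (S.t (i - 1)) (S.t i)) :=
          into_cur S (by omega) hiN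
            (row_repl S j hj1 hjN (S.v i - S.ρ i) (by omega) (by omega)
              (Or.inr (Or.inr hρj1)))
        have hsq : ((S.v i - S.ρ i, S.t j) : Replica) ∈ SqRect (S.v i, S.t i) (5 * S.ρ i) :=
          mem_SqRect (by omega) (by omega) (by omega) htji
        have hmin : S.us i ≤ S.v i - S.ρ i := S.serv_min i hi1 hiN _ hw hsq
        omega
    rcases le_or_gt (S.t i) (S.t j + 4 * S.ρ j) with hc | hc
    · exact key (S.t i) htji hc le_rfl (by omega)
    · exact key (S.t j + 4 * S.ρ j) (by omega) le_rfl (by omega) (by omega)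
  -- P1 : 4 ρ j ≤ ρ i
  have hP1 : 4 * S.ρ j ≤ S.ρ i := by
    by_contra hcon
    push_neg at hcon
    -- killing a replica of step ≤ j in the region
    have base_kill : ∀ a b : ℕ,
        ((a, b) : Replica) ∈ Repl (S.sol (j - 1) ∪ vertPath 0 (S.t (j - 1)) (S.t j)) →
        S.v i ≤ a + S.ρ i → a ≤ S.v i → S.t j ≤ b + 5 * S.ρ j → b ≤ S.t j → False := by
      intro a b hmem hr1 hr2 hr3 hb4
      have hsq : ((a, b) : Replica) ∈ SqRect (S.v j, S.t j) (5 * S.ρ j) :=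
        mem_SqRect (by omega) (by omega) (by omega) hb4
      have hmin : S.us j ≤ a := S.serv_min j hj1 hjN _ hmem hsq
      omega
    have base0 : ∀ a b : ℕ, ((a, b) : Replica) ∈ Repl (S.sol j) →
        S.v i ≤ a + S.ρ i → a ≤ S.v i → S.t j ≤ b + 5 * S.ρ j → False := by
      intro a b hmem hr1 hr2 hr3
      have ha0 : 1 ≤ a := by omega
      rw [S.step j hj1 hjN] at hmem
      rw [Repl_union, Repl_union, Repl_union, Repl_union] at hmem
      rcases hmem with ((((hA | hB) | hC) | hD) | hE)
      · rcases le_or_gt b (S.t j) with hb | hb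
        · exact base_kill a b (Repl_union.mpr (Or.inl hA)) hr1 hr2 hr3 hb
        · have hcross : ((a, S.t j) : Replica) ∈ Repl (S.sol (j - 1)) :=
            repl_cross S (j - 1) (by omega) a b (S.t j) hA
              (S.t_mono (j - 1) j (by omega) hjN) (by omega)
          exact base_kill a (S.t j) (Repl_union.mpr (Or.inl hcross)) hr1 hr2
            (by omega) le_rfl
      · rcases mem_Repl_vertPath' hB with h | h <;> omega
      · rcases mem_Repl_vertPath' hC with h | h <;> omega
      · rcases mem_Repl_horizPath' hD with h | h <;> omega
      · rcases mem_Repl_vertPath' hE with h | h <;> omega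
    -- the invariant
    have inv : ∀ k, k < i → j ≤ k → ∀ a b : ℕ, ((a, b) : Replica) ∈ Repl (S.sol k) →
        S.v i ≤ a + S.ρ i → a ≤ S.v i → S.t j ≤ b + 5 * S.ρ j → False := by
      intro k
      induction k with
      | zero => intro _ h2 a b _ _ _ _; omega
      | succ k ih =>
        intro hki hjk a b hmem hr1 hr2 hr3
        rcases Nat.eq_or_lt_of_le hjk with hjeq | hjlt
        · rw [← hjeq] at hmem
          exact base0 a b hmem hr1 hr2 hr3
        · -- j ≤ k, m := k+1 strictly between j and i
          have hm1 : 1 ≤ k + 1 := by omega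
          have hmN : k + 1 ≤ S.N := by omega
          have ha0 : 1 ≤ a := by omega
          have htjm : S.t j ≤ S.t (k + 1) := S.t_mono j (k + 1) (by omega) hmN
          have htmi : S.t (k + 1) ≤ S.t i := S.t_mono (k + 1) i (by omega) hiN
          have hsqm : S.v (k + 1) - 5 * S.ρ (k + 1) ≤ S.us (k + 1) ∧
              S.us (k + 1) ≤ S.v (k + 1) ∧
              S.t (k + 1) - 5 * S.ρ (k + 1) ≤ S.ss (k + 1) ∧ S.ss (k + 1) ≤ S.t (k + 1) :=
            SqRect_elim (S.serv_mem (k + 1) hm1 hmN).2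
          -- shared continuation
          have cont : S.us (k + 1) ≤ a → a ≤ S.v (k + 1) →
              (S.us (k + 1) < S.v (k + 1) ∨ S.ss (k + 1) < S.t (k + 1) ∨ 1 ≤ S.ρ (k + 1)) →
              False := by
            intro hua hav hdisj
            by_cases hcase : S.us (k + 1) + S.ρ i ≤ S.v i
            · -- the row of step k+1 crosses the covering strip of r_i
              have hw : ((S.v i - S.ρ i, S.t (k + 1)) : Replica) ∈
                  Repl (S.sol (i - 1) ∪ vertPath 0 (S.t (i - 1)) (S.t i)) :=
                into_cur S (by omega) hiN
                  (row_repl S (k + 1) hm1 hmN (S.v i - S.ρ i) (by omega) (by omega) hdisj)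
              have hsq : ((S.v i - S.ρ i, S.t (k + 1)) : Replica) ∈
                  SqRect (S.v i, S.t i) (5 * S.ρ i) :=
                mem_SqRect (by omega) (by omega) (by omega) htmi
              have hmin : S.us i ≤ S.v i - S.ρ i := S.serv_min i hi1 hiN _ hw hsq
              omega
            · -- serving node of step k+1 lies inside the near strip of r_i
              have hσ := (S.serv_mem (k + 1) hm1 hmN).1
              rw [Repl_union] at hσ
              rcases hσ with hσ | hσ
              · by_cases hss : S.t j ≤ S.ss (k + 1) + 5 * S.ρ j
                · exact ih (by omega) (by omega) (S.us (k + 1)) (S.ss (k + 1)) hσ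
                    (by omega) (by omega) hss
                · -- very old serving time forces a large ρ (k+1); SQ5 column of k+1
                  -- reaches above t i at a node too close to v i
                  have hρm : S.ρ j < S.ρ (k + 1) := by omega
                  have hcol : ((S.us (k + 1), S.t i) : Replica) ∈
                      Repl (S.sol (k + 1)) :=
                    col_repl S (k + 1) hm1 hmN (by omega) (S.t i) htmi (by omega)
                  have hrho := rho_min_nat
                    (S.rho_min i hi1 hiN _ (into_cur S (by omega) hiN hcol))
                    (by omega) le_rfl
                  rcases hrho with h | h <;> omega
              · rcases mem_Repl_vertPath' hσ with h | h <;> omega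
          rw [S.step (k + 1) hm1 hmN] at hmem
          rw [Repl_union, Repl_union, Repl_union, Repl_union] at hmem
          rcases hmem with ((((hA | hB) | hC) | hD) | hE)
          · exact ih (by omega) (by omega) a b hA hr1 hr2 hr3
          · rcases mem_Repl_vertPath' hB with h | h <;> omega
          · rcases mem_Repl_vertPath' hC with h | h
            · omega
            · exact cont (by omega) (by omega) (Or.inr (Or.inl h.2.2.2))
          · rcases mem_Repl_horizPath' hD with h | h
            · omega
            · exact cont (by omega) (by omega) (Or.inl h.2.2.2)
          · rcases mem_Repl_vertPath' hE with h | h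
            · omega
            · exact cont (by omega) (by omega) (Or.inr (Or.inr (by omega)))
    -- apply the invariant to the closest replica of r_i
    have hcf := closest_nat S i hi1 hiN
    have hq' := S.closest_mem i hi1 hiN
    rw [Repl_union] at hq'
    rcases hq' with hq' | hq'
    · exact inv (i - 1) (by omega) (by omega) (S.u' i) (S.s' i) hq'
        (by omega) hcf.1 (by omega)
    · rcases mem_Repl_vertPath' hq' with h | h <;> omega
  exact ⟨hP1, by omega, hP2, hsqj.2.1⟩
end
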